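/- arXiv:math/0612670 — 2 statements merged into one kernel-verified Lean document; each statement's English description precedes it below -/
import Mathlib

section
/- For k ∈ ℝ, let P_k(x, y) = y² − kxy + y − x³ + x². If k < −4 or k > 2, then P_k has no zero on the unit torus, i.e., there are no x, y ∈ ℂ with |x| = |y| = 1 and P_k(x, y) = 0. Moreover, for k = −4 and for k = 2 there do exist x, y ∈ ℂ with |x| = |y| = 1 and P_k(x, y) = 0. -/
/-- For real `k` with `k < −4` or `k > 2`, the polynomial
`P_k(x, y) = y² − kxy + y − x³ + x²` has no zero on the unit torus; for
`k = −4` and `k = 2` it does have a zero on the unit torus. -/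
theorem Pk_torus_zeros :
    (∀ k : ℝ, k < -4 ∨ 2 < k →
      ¬ ∃ x y : ℂ, ‖x‖ = 1 ∧ ‖y‖ = 1 ∧
        y ^ 2 - (k : ℂ) * x * y + y - x ^ 3 + x ^ 2 = 0) ∧
    (∃ x y : ℂ, ‖x‖ = 1 ∧ ‖y‖ = 1 ∧
      y ^ 2 - (-4 : ℂ) * x * y + y - x ^ 3 + x ^ 2 = 0) ∧
    (∃ x y : ℂ, ‖x‖ = 1 ∧ ‖y‖ = 1 ∧
      y ^ 2 - (2 : ℂ) * x * y + y - x ^ 3 + x ^ 2 = 0) := by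
  refine ⟨?_, ⟨-1, 1, by simp, by simp, by norm_num⟩, ⟨1, 1, by simp, by simp, by norm_num⟩⟩
  rintro k hk ⟨x, y, hx, hy, h⟩
  have hx0 : x ≠ 0 := by intro h0; simp [h0] at hx
  have hxc : x * (starRingEnd ℂ) x = 1 := by
    rw [Complex.mul_conj]; norm_cast; rw [Complex.normSq_eq_norm_sq, hx]; norm_num
  have hyc : y * (starRingEnd ℂ) y = 1 := by
    rw [Complex.mul_conj]; norm_cast; rw [Complex.normSq_eq_norm_sq, hy]; norm_num
  have h2 := congrArg (starRingEnd ℂ) h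
  simp only [map_sub, map_add, map_mul, map_pow, Complex.conj_ofReal, map_zero] at h2
  set a := (starRingEnd ℂ) x with ha
  set b := (starRingEnd ℂ) y with hb
  -- eliminate k between h and its conjugate:
  have key : (y + x) * (y - x ^ 3) = 0 := by
    linear_combination x * h - x ^ 3 * y ^ 2 * h2 +
      (-((k : ℂ) * x ^ 2 * y ^ 2 * b + y ^ 2 * (x ^ 2 * a ^ 2 + x * a + 1)
        - x * y ^ 2 - x ^ 2 * y ^ 2 * a)) * hxc +
      (x ^ 3 * (1 + y * b) - (k : ℂ) * x ^ 2 * y + x ^ 3 * y) * hyc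
  rcases mul_eq_zero.mp key with hc | hc
  · -- y = -x, so k = x + conj x - 2 = 2 re x - 2 ∈ [-4, 0]
    have hkx : (k : ℂ) * x = x ^ 2 - 2 * x + 1 := by
      have h3 : (k : ℂ) * x * x = (x ^ 2 - 2 * x + 1) * x := by
        linear_combination h + ((k : ℂ) * x + x - y - 1) * hc
      exact mul_right_cancel₀ hx0 h3
    have hk2 : (k : ℂ) = x + (starRingEnd ℂ) x - 2 := by
      rw [← ha]
      linear_combination a * hkx + (x - (k : ℂ) - 2) * hxc
    rw [Complex.add_conj] at hk2
    have hk3 : k = 2 * x.re - 2 := by exact_mod_cast hk2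
    have hre : |x.re| ≤ 1 := by
      have := Complex.abs_re_le_norm x
      rwa [hx] at this
    rcases abs_le.mp hre with ⟨h1, h2'⟩
    rcases hk with hk | hk <;> linarith
  · -- y = x³, so k = x² + conj x ² = 2 re (x²) ∈ [-2, 2]
    have hkx : (k : ℂ) * x ^ 2 = x ^ 4 + 1 := by
      have h3 : (k : ℂ) * x ^ 2 * x ^ 2 = (x ^ 4 + 1) * x ^ 2 := by
        linear_combination -h + (y + x ^ 3 + 1 - (k : ℂ) * x) * hc
      exact mul_right_cancel₀ (pow_ne_zero 2 hx0) h3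
    have hk2 : (k : ℂ) = x ^ 2 + (starRingEnd ℂ) (x ^ 2) := by
      rw [map_pow, ← ha]
      linear_combination a ^ 2 * hkx + (1 + x * a) * (x ^ 2 - (k : ℂ)) * hxc
    rw [Complex.add_conj] at hk2
    have hk3 : k = 2 * (x ^ 2).re := by exact_mod_cast hk2
    have hre : |(x ^ 2).re| ≤ 1 := by
      have h4 := Complex.abs_re_le_norm (x ^ 2)
      rwa [norm_pow, hx, one_pow] at h4
    rcases abs_le.mp hre with ⟨h1, h2'⟩
    rcases hk with hk | hk <;> linarith
end

section
/- Let k ∈ ℂ be such that P_k(x, y) = y² − kxy + y − x³ + x² has no zero on the unit torus. Then for every x ∈ ℂ with |x| = 1, the quadratic polynomial in y, y² + (1 − kx)y + (x² − x³), has exactly two roots y₁ and y₂ (counted with multiplicity), and they satisfy |y₁| < 1 and |y₂| > 1. -/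
noncomputable def Complex.abs : AbsoluteValue ℂ ℝ := NormedField.toAbsoluteValue ℂ

lemma Complex.continuous_abs : Continuous Complex.abs := continuous_norm

lemma Complex.norm_eq_abs (z : ℂ) : ‖z‖ = Complex.abs z := rfl

private lemma quad_factor (b c : ℂ) :
    ∃ z₁ z₂ : ℂ, ∀ y : ℂ, y ^ 2 + b * y + c = (y - z₁) * (y - z₂) := by
  obtain ⟨d, hd⟩ := IsAlgClosed.exists_pow_nat_eq (b ^ 2 - 4 * c) (n := 2) (by norm_num)
  exact ⟨(-b + d) / 2, (-b - d) / 2, fun y => by linear_combination hd / 4⟩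

private lemma root_abs_le {b c z : ℂ} (h : z ^ 2 + b * z + c = 0) :
    Complex.abs z ≤ max 1 (Complex.abs b + Complex.abs c) := by
  rcases le_or_gt (Complex.abs z) 1 with h1 | h1
  · exact h1.trans (le_max_left _ _)
  · refine le_trans ?_ (le_max_right _ _)
    have hz : z ^ 2 = -(b * z + c) := by linear_combination h
    have h2 : Complex.abs z ^ 2 ≤ Complex.abs b * Complex.abs z + Complex.abs c := by
      calc Complex.abs z ^ 2 = Complex.abs (z ^ 2) := by rw [map_pow]
        _ = Complex.abs (b * z + c) := by rw [hz, Complex.abs.map_neg]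
        _ ≤ Complex.abs (b * z) + Complex.abs c := Complex.abs.add_le _ _
        _ = Complex.abs b * Complex.abs z + Complex.abs c := by rw [map_mul]
    nlinarith [Complex.abs.nonneg c, Complex.abs.nonneg b]

private lemma factor_coeffs {b c z₁ z₂ : ℂ}
    (h : ∀ y : ℂ, y ^ 2 + b * y + c = (y - z₁) * (y - z₂)) :
    b = -(z₁ + z₂) ∧ c = z₁ * z₂ := by
  have h0 := h 0
  have h1 := h 1
  constructor
  · linear_combination h1 - h0
  · linear_combination h0

private lemma abs_sub_lower {z w : ℂ} : Complex.abs z - Complex.abs w ≤ Complex.abs (z - w) :=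
  (le_abs_self _).trans (Complex.abs.abs_abv_sub_le_abv_sub z w)


private lemma phi_cont (k x₀ : ℂ) (R : ℝ) :
    Continuous (fun x : ℂ => Complex.abs (k * (x - x₀)) * R +
      Complex.abs ((x₀ ^ 2 - x₀ ^ 3) - (x ^ 2 - x ^ 3)) + Complex.abs (k * (x - x₀))) := by
  have h1 : Continuous fun x : ℂ => k * (x - x₀) :=
    continuous_const.mul (continuous_id.sub continuous_const)
  have h2 : Continuous fun x : ℂ => (x₀ ^ 2 - x₀ ^ 3) - (x ^ 2 - x ^ 3) :=
    continuous_const.sub ((continuous_pow 2).sub (continuous_pow 3))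
  exact (((Complex.continuous_abs.comp h1).mul continuous_const).add
    (Complex.continuous_abs.comp h2)).add (Complex.continuous_abs.comp h1)

/-- If `P_k(x, y) = y² − kxy + y − x³ + x²` has no zero on the unit torus, then
for every `x` with `|x| = 1` the monic quadratic `y² + (1 − kx)y + (x² − x³)`
has exactly two roots (with multiplicity) `y₁, y₂`, one satisfying `|y₁| < 1`
and the other `|y₂| > 1`. -/
theorem roots_split_by_unit_circle (k : ℂ)
    (hk : ¬ ∃ x y : ℂ, ‖x‖ = 1 ∧ ‖y‖ = 1 ∧
      y ^ 2 - k * x * y + y - x ^ 3 + x ^ 2 = 0) :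
    ∀ x : ℂ, ‖x‖ = 1 →
      ∃ y₁ y₂ : ℂ,
        (∀ y : ℂ, y ^ 2 + (1 - k * x) * y + (x ^ 2 - x ^ 3) =
          (y - y₁) * (y - y₂)) ∧
        ‖y₁‖ < 1 ∧ 1 < ‖y₂‖ := by
  classical
  set U : Set ℂ := {x | ∃ y₁ y₂ : ℂ,
      (∀ y : ℂ, y ^ 2 + (1 - k * x) * y + (x ^ 2 - x ^ 3) = (y - y₁) * (y - y₂)) ∧
      Complex.abs y₁ < 1 ∧ 1 < Complex.abs y₂} with hUdef
  set V₁ : Set ℂ := {x | ∀ y : ℂ,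
      y ^ 2 + (1 - k * x) * y + (x ^ 2 - x ^ 3) = 0 → Complex.abs y < 1} with hV₁def
  set V₂ : Set ℂ := {x | ∀ y : ℂ,
      y ^ 2 + (1 - k * x) * y + (x ^ 2 - x ^ 3) = 0 → 1 < Complex.abs y} with hV₂def
  -- roots on the unit circle are excluded by `hk`
  have hroot_ne : ∀ x y : ℂ, Complex.abs x = 1 →
      y ^ 2 + (1 - k * x) * y + (x ^ 2 - x ^ 3) = 0 → Complex.abs y ≠ 1 := by
    intro x y hx hy hy1
    exact hk ⟨x, y, hx, hy1, by linear_combination hy⟩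
  -- perturbation estimate
  have hqpert : ∀ x₀ x z : ℂ, z ^ 2 + (1 - k * x) * z + (x ^ 2 - x ^ 3) = 0 →
      Complex.abs (z ^ 2 + (1 - k * x₀) * z + (x₀ ^ 2 - x₀ ^ 3)) ≤
        Complex.abs (k * (x - x₀)) * Complex.abs z +
          Complex.abs ((x₀ ^ 2 - x₀ ^ 3) - (x ^ 2 - x ^ 3)) := by
    intro x₀ x z hz
    have h : z ^ 2 + (1 - k * x₀) * z + (x₀ ^ 2 - x₀ ^ 3) =
        k * (x - x₀) * z + ((x₀ ^ 2 - x₀ ^ 3) - (x ^ 2 - x ^ 3)) := by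
      linear_combination hz
    rw [h]
    calc Complex.abs (k * (x - x₀) * z + ((x₀ ^ 2 - x₀ ^ 3) - (x ^ 2 - x ^ 3)))
        ≤ Complex.abs (k * (x - x₀) * z) +
            Complex.abs ((x₀ ^ 2 - x₀ ^ 3) - (x ^ 2 - x ^ 3)) := Complex.abs.add_le _ _
      _ = Complex.abs (k * (x - x₀)) * Complex.abs z +
            Complex.abs ((x₀ ^ 2 - x₀ ^ 3) - (x ^ 2 - x ^ 3)) := by rw [map_mul]
  -- a uniform bound for roots of the perturbed polynomial
  have hRbound : ∀ x₀ : ℂ, ∀ x z : ℂ,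
      Complex.abs (k * (x - x₀)) + Complex.abs ((x₀ ^ 2 - x₀ ^ 3) - (x ^ 2 - x ^ 3)) ≤ 1 →
      z ^ 2 + (1 - k * x) * z + (x ^ 2 - x ^ 3) = 0 →
      Complex.abs z ≤ max 1 (Complex.abs (1 - k * x₀) + Complex.abs (x₀ ^ 2 - x₀ ^ 3) + 1) := by
    intro x₀ x z hsmall hz
    have hb := root_abs_le hz
    have hbx : Complex.abs (1 - k * x) ≤ Complex.abs (1 - k * x₀) +
        Complex.abs (k * (x - x₀)) := by
      calc Complex.abs (1 - k * x) = Complex.abs ((1 - k * x₀) - k * (x - x₀)) := by ring_nf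
        _ ≤ Complex.abs (1 - k * x₀) + Complex.abs (k * (x - x₀)) :=
          Complex.abs.sub_le_add _ _
    have hcx : Complex.abs (x ^ 2 - x ^ 3) ≤ Complex.abs (x₀ ^ 2 - x₀ ^ 3) +
        Complex.abs ((x₀ ^ 2 - x₀ ^ 3) - (x ^ 2 - x ^ 3)) := by
      calc Complex.abs (x ^ 2 - x ^ 3)
          = Complex.abs ((x₀ ^ 2 - x₀ ^ 3) - ((x₀ ^ 2 - x₀ ^ 3) - (x ^ 2 - x ^ 3))) := by
            ring_nf
        _ ≤ _ := Complex.abs.sub_le_add _ _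
    have h1 : Complex.abs (1 - k * x) + Complex.abs (x ^ 2 - x ^ 3) ≤
        Complex.abs (1 - k * x₀) + Complex.abs (x₀ ^ 2 - x₀ ^ 3) + 1 := by linarith
    calc Complex.abs z ≤ max 1 (Complex.abs (1 - k * x) + Complex.abs (x ^ 2 - x ^ 3)) := hb
      _ ≤ max 1 (Complex.abs (1 - k * x₀) + Complex.abs (x₀ ^ 2 - x₀ ^ 3) + 1) :=
        max_le_max le_rfl h1
  -- cover of the sphere
  have hcover : ∀ x : ℂ, Complex.abs x = 1 → x ∈ U ∪ (V₁ ∪ V₂) := by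
    intro x hx
    obtain ⟨y₁, y₂, hfac⟩ := quad_factor (1 - k * x) (x ^ 2 - x ^ 3)
    have hr1 : y₁ ^ 2 + (1 - k * x) * y₁ + (x ^ 2 - x ^ 3) = 0 := by rw [hfac]; ring
    have hr2 : y₂ ^ 2 + (1 - k * x) * y₂ + (x ^ 2 - x ^ 3) = 0 := by rw [hfac]; ring
    have h1 := (hroot_ne x y₁ hx hr1).lt_or_gt
    have h2 := (hroot_ne x y₂ hx hr2).lt_or_gt
    have hrootsmem : ∀ y : ℂ, y ^ 2 + (1 - k * x) * y + (x ^ 2 - x ^ 3) = 0 →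
        y = y₁ ∨ y = y₂ := by
      intro y hy
      rw [hfac y, mul_eq_zero, sub_eq_zero, sub_eq_zero] at hy
      exact hy
    rcases h1 with h1 | h1 <;> rcases h2 with h2 | h2
    · right; left
      intro y hy
      rcases hrootsmem y hy with rfl | rfl
      · exact h1
      · exact h2
    · exact Or.inl ⟨y₁, y₂, hfac, h1, h2⟩
    · exact Or.inl ⟨y₂, y₁, fun y => by rw [hfac y]; ring, h2, h1⟩
    · right; right
      intro y hy
      rcases hrootsmem y hy with rfl | rfl
      · exact h1
      · exact h2
  -- openness of V₁
  have hV₁open : IsOpen V₁ := by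
    rw [isOpen_iff_mem_nhds]
    intro x₀ hx₀
    obtain ⟨y₁, y₂, hfac⟩ := quad_factor (1 - k * x₀) (x₀ ^ 2 - x₀ ^ 3)
    have hy₁ : Complex.abs y₁ < 1 := hx₀ y₁ (by rw [hfac]; ring)
    have hy₂ : Complex.abs y₂ < 1 := hx₀ y₂ (by rw [hfac]; ring)
    set ε : ℝ := min (1 - Complex.abs y₁) (1 - Complex.abs y₂) with hεdef
    have hε : 0 < ε := lt_min (by linarith) (by linarith)
    set R : ℝ := max 1 (Complex.abs (1 - k * x₀) + Complex.abs (x₀ ^ 2 - x₀ ^ 3) + 1) with hRdef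
    have hR1 : (1 : ℝ) ≤ R := le_max_left _ _
    set φ : ℂ → ℝ := fun x => Complex.abs (k * (x - x₀)) * R +
        Complex.abs ((x₀ ^ 2 - x₀ ^ 3) - (x ^ 2 - x ^ 3)) + Complex.abs (k * (x - x₀)) with hφdef
    have hφcont : Continuous φ := phi_cont k x₀ R
    have hφ0 : φ x₀ = 0 := by simp [hφdef]
    have ht : 0 < min (ε * ε) 1 := lt_min (mul_pos hε hε) one_pos
    refine Filter.mem_of_superset
      (hφcont.continuousAt (x := x₀) (Iio_mem_nhds (by rw [hφ0]; exact ht))) ?_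
    intro x hxT
    simp only [Set.mem_preimage, Set.mem_Iio] at hxT
    intro z hz
    by_contra hcon
    push_neg at hcon
    have hΔbnn := Complex.abs.nonneg (k * (x - x₀))
    have hΔcnn := Complex.abs.nonneg ((x₀ ^ 2 - x₀ ^ 3) - (x ^ 2 - x ^ 3))
    have hsmall : Complex.abs (k * (x - x₀)) +
        Complex.abs ((x₀ ^ 2 - x₀ ^ 3) - (x ^ 2 - x ^ 3)) ≤ 1 := by
      have h1 : φ x < 1 := lt_of_lt_of_le hxT (min_le_right _ _)
      simp only [hφdef] at h1
      nlinarith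
    have hzR : Complex.abs z ≤ R := hRbound x₀ x z hsmall hz
    have hlow : ε * ε ≤ Complex.abs (z ^ 2 + (1 - k * x₀) * z + (x₀ ^ 2 - x₀ ^ 3)) := by
      rw [hfac z, map_mul]
      have h1 : ε ≤ Complex.abs (z - y₁) := by
        have := abs_sub_lower (z := z) (w := y₁)
        have hε1 : ε ≤ 1 - Complex.abs y₁ := min_le_left _ _
        linarith
      have h2 : ε ≤ Complex.abs (z - y₂) := by
        have := abs_sub_lower (z := z) (w := y₂)
        have hε2 : ε ≤ 1 - Complex.abs y₂ := min_le_right _ _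
        linarith
      exact mul_le_mul h1 h2 hε.le (Complex.abs.nonneg _)
    have hup := hqpert x₀ x z hz
    have hmono : Complex.abs (k * (x - x₀)) * Complex.abs z ≤
        Complex.abs (k * (x - x₀)) * R := mul_le_mul_of_nonneg_left hzR hΔbnn
    have hφε : φ x < ε * ε := lt_of_lt_of_le hxT (min_le_left _ _)
    simp only [hφdef] at hφε
    linarith
  -- openness of V₂
  have hV₂open : IsOpen V₂ := by
    rw [isOpen_iff_mem_nhds]
    intro x₀ hx₀
    obtain ⟨y₁, y₂, hfac⟩ := quad_factor (1 - k * x₀) (x₀ ^ 2 - x₀ ^ 3)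
    have hy₁ : 1 < Complex.abs y₁ := hx₀ y₁ (by rw [hfac]; ring)
    have hy₂ : 1 < Complex.abs y₂ := hx₀ y₂ (by rw [hfac]; ring)
    set ε : ℝ := min (Complex.abs y₁ - 1) (Complex.abs y₂ - 1) with hεdef
    have hε : 0 < ε := lt_min (by linarith) (by linarith)
    set φ : ℂ → ℝ := fun x => Complex.abs (k * (x - x₀)) * (0 : ℝ) +
        Complex.abs ((x₀ ^ 2 - x₀ ^ 3) - (x ^ 2 - x ^ 3)) + Complex.abs (k * (x - x₀)) with hφdef
    have hφcont : Continuous φ := phi_cont k x₀ 0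
    have hφ0 : φ x₀ = 0 := by simp [hφdef]
    have ht : 0 < ε * ε := mul_pos hε hε
    refine Filter.mem_of_superset
      (hφcont.continuousAt (x := x₀) (Iio_mem_nhds (by rw [hφ0]; exact ht))) ?_
    intro x hxT
    simp only [Set.mem_preimage, Set.mem_Iio] at hxT
    intro z hz
    by_contra hcon
    push_neg at hcon
    have hΔbnn := Complex.abs.nonneg (k * (x - x₀))
    have hΔcnn := Complex.abs.nonneg ((x₀ ^ 2 - x₀ ^ 3) - (x ^ 2 - x ^ 3))
    have hlow : ε * ε ≤ Complex.abs (z ^ 2 + (1 - k * x₀) * z + (x₀ ^ 2 - x₀ ^ 3)) := by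
      rw [hfac z, map_mul]
      have h1 : ε ≤ Complex.abs (z - y₁) := by
        have := abs_sub_lower (z := y₁) (w := z)
        have h' : Complex.abs (y₁ - z) = Complex.abs (z - y₁) := by
          rw [← Complex.abs.map_neg (y₁ - z)]; ring_nf
        have hε1 : ε ≤ Complex.abs y₁ - 1 := min_le_left _ _
        rw [h'] at this
        linarith
      have h2 : ε ≤ Complex.abs (z - y₂) := by
        have := abs_sub_lower (z := y₂) (w := z)
        have h' : Complex.abs (y₂ - z) = Complex.abs (z - y₂) := by
          rw [← Complex.abs.map_neg (y₂ - z)]; ring_nf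
        have hε2 : ε ≤ Complex.abs y₂ - 1 := min_le_right _ _
        rw [h'] at this
        linarith
      exact mul_le_mul h1 h2 hε.le (Complex.abs.nonneg _)
    have hup := hqpert x₀ x z hz
    have hmono : Complex.abs (k * (x - x₀)) * Complex.abs z ≤
        Complex.abs (k * (x - x₀)) * 1 := mul_le_mul_of_nonneg_left hcon hΔbnn
    simp only [hφdef] at hxT
    nlinarith
  -- openness of U
  have hUopen : IsOpen U := by
    rw [isOpen_iff_mem_nhds]
    intro x₀ hx₀
    obtain ⟨y₁, y₂, hfac, hy₁, hy₂⟩ := hx₀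
    have hd : 0 < Complex.abs (y₂ - y₁) := by
      rw [Complex.abs.pos_iff, sub_ne_zero]
      intro h
      rw [h] at hy₂
      linarith
    set d : ℝ := Complex.abs (y₂ - y₁) with hddef
    set ε : ℝ := min (min (1 - Complex.abs y₁) (Complex.abs y₂ - 1)) (d / 4) with hεdef
    have hε : 0 < ε := lt_min (lt_min (by linarith) (by linarith)) (by linarith)
    set R : ℝ := max 1 (Complex.abs (1 - k * x₀) + Complex.abs (x₀ ^ 2 - x₀ ^ 3) + 1) with hRdef
    have hR1 : (1 : ℝ) ≤ R := le_max_left _ _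
    set φ : ℂ → ℝ := fun x => Complex.abs (k * (x - x₀)) * R +
        Complex.abs ((x₀ ^ 2 - x₀ ^ 3) - (x ^ 2 - x ^ 3)) + Complex.abs (k * (x - x₀)) with hφdef
    have hφcont : Continuous φ := phi_cont k x₀ R
    have hφ0 : φ x₀ = 0 := by simp [hφdef]
    have ht : 0 < min (min (ε * ε) 1) (d / 4) :=
      lt_min (lt_min (mul_pos hε hε) one_pos) (by linarith)
    refine Filter.mem_of_superset
      (hφcont.continuousAt (x := x₀) (Iio_mem_nhds (by rw [hφ0]; exact ht))) ?_
    intro x hxT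
    simp only [Set.mem_preimage, Set.mem_Iio] at hxT
    have hΔbnn := Complex.abs.nonneg (k * (x - x₀))
    have hΔcnn := Complex.abs.nonneg ((x₀ ^ 2 - x₀ ^ 3) - (x ^ 2 - x ^ 3))
    have hΔbR : 0 ≤ Complex.abs (k * (x - x₀)) * R :=
      mul_le_mul_of_nonneg_left (le_trans zero_le_one hR1) hΔbnn |>.trans' (by nlinarith)
    -- basic consequences of hxT
    have hφεε : φ x < ε * ε := lt_of_lt_of_le hxT ((min_le_left _ _).trans (min_le_left _ _))
    have hφ1 : φ x < 1 := lt_of_lt_of_le hxT ((min_le_left _ _).trans (min_le_right _ _))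
    have hφd : φ x < d / 4 := lt_of_lt_of_le hxT (min_le_right _ _)
    simp only [hφdef] at hφεε hφ1 hφd
    have hΔble : Complex.abs (k * (x - x₀)) ≤ Complex.abs (k * (x - x₀)) * R := by nlinarith
    have hsmall : Complex.abs (k * (x - x₀)) +
        Complex.abs ((x₀ ^ 2 - x₀ ^ 3) - (x ^ 2 - x ^ 3)) ≤ 1 := by nlinarith
    -- factor the perturbed polynomial
    obtain ⟨z₁, z₂, hfacx⟩ := quad_factor (1 - k * x) (x ^ 2 - x ^ 3)
    have hz₁ : z₁ ^ 2 + (1 - k * x) * z₁ + (x ^ 2 - x ^ 3) = 0 := by rw [hfacx]; ring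
    have hz₂ : z₂ ^ 2 + (1 - k * x) * z₂ + (x ^ 2 - x ^ 3) = 0 := by rw [hfacx]; ring
    have hclose : ∀ z : ℂ, z ^ 2 + (1 - k * x) * z + (x ^ 2 - x ^ 3) = 0 →
        Complex.abs (z - y₁) < ε ∨ Complex.abs (z - y₂) < ε := by
      intro z hz
      by_contra hcon
      push_neg at hcon
      obtain ⟨hc1, hc2⟩ := hcon
      have hzR : Complex.abs z ≤ R := hRbound x₀ x z hsmall hz
      have hlow : ε * ε ≤ Complex.abs (z ^ 2 + (1 - k * x₀) * z + (x₀ ^ 2 - x₀ ^ 3)) := by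
        rw [hfac z, map_mul]
        exact mul_le_mul hc1 hc2 hε.le (Complex.abs.nonneg _)
      have hup := hqpert x₀ x z hz
      have hmono : Complex.abs (k * (x - x₀)) * Complex.abs z ≤
          Complex.abs (k * (x - x₀)) * R := mul_le_mul_of_nonneg_left hzR hΔbnn
      linarith
    -- sums of roots are close
    have hsum : Complex.abs ((z₁ + z₂) - (y₁ + y₂)) < d / 4 := by
      have hb₀ := (factor_coeffs hfac).1
      have hbx := (factor_coeffs hfacx).1
      have heq : (z₁ + z₂) - (y₁ + y₂) = k * (x - x₀) := by
        linear_combination hbx - hb₀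
      rw [heq]
      linarith
    have h1 := hclose z₁ hz₁
    have h2 := hclose z₂ hz₂
    have hε₁ : ε ≤ 1 - Complex.abs y₁ := (min_le_left _ _).trans (min_le_left _ _)
    have hε₂ : ε ≤ Complex.abs y₂ - 1 := (min_le_left _ _).trans (min_le_right _ _)
    have hεd : ε ≤ d / 4 := min_le_right _ _
    have hnear1 : ∀ z : ℂ, Complex.abs (z - y₁) < ε → Complex.abs z < 1 := by
      intro z hz
      have := abs_sub_lower (z := z) (w := y₁)
      linarith
    have hnear2 : ∀ z : ℂ, Complex.abs (z - y₂) < ε → 1 < Complex.abs z := by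
      intro z hz
      have := abs_sub_lower (z := y₂) (w := z)
      have h' : Complex.abs (y₂ - z) = Complex.abs (z - y₂) := by
        rw [← Complex.abs.map_neg (y₂ - z)]; ring_nf
      rw [h'] at this
      linarith
    have hnotboth1 : ¬ (Complex.abs (z₁ - y₁) < ε ∧ Complex.abs (z₂ - y₁) < ε) := by
      rintro ⟨ha, hb⟩
      have : d ≤ Complex.abs ((z₁ + z₂) - (y₁ + y₂)) +
          Complex.abs (z₁ - y₁) + Complex.abs (z₂ - y₁) := by
        have heq : y₂ - y₁ = -((z₁ + z₂) - (y₁ + y₂)) + (z₁ - y₁) + (z₂ - y₁) := by ring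
        calc d = Complex.abs (y₂ - y₁) := rfl
          _ = Complex.abs (-((z₁ + z₂) - (y₁ + y₂)) + (z₁ - y₁) + (z₂ - y₁)) := by rw [← heq]
          _ ≤ Complex.abs (-((z₁ + z₂) - (y₁ + y₂)) + (z₁ - y₁)) +
              Complex.abs (z₂ - y₁) := Complex.abs.add_le _ _
          _ ≤ Complex.abs (-((z₁ + z₂) - (y₁ + y₂))) + Complex.abs (z₁ - y₁) +
              Complex.abs (z₂ - y₁) := by
                have := Complex.abs.add_le (-((z₁ + z₂) - (y₁ + y₂))) (z₁ - y₁)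
                linarith
          _ = _ := by rw [Complex.abs.map_neg]
      linarith
    have hnotboth2 : ¬ (Complex.abs (z₁ - y₂) < ε ∧ Complex.abs (z₂ - y₂) < ε) := by
      rintro ⟨ha, hb⟩
      have : d ≤ Complex.abs ((z₁ + z₂) - (y₁ + y₂)) +
          Complex.abs (z₁ - y₂) + Complex.abs (z₂ - y₂) := by
        have heq : y₂ - y₁ = ((z₁ + z₂) - (y₁ + y₂)) - (z₁ - y₂) - (z₂ - y₂) := by ring
        calc d = Complex.abs (y₂ - y₁) := rfl
          _ = Complex.abs (((z₁ + z₂) - (y₁ + y₂)) - (z₁ - y₂) - (z₂ - y₂)) := by rw [← heq]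
          _ ≤ Complex.abs (((z₁ + z₂) - (y₁ + y₂)) - (z₁ - y₂)) +
              Complex.abs (z₂ - y₂) := Complex.abs.sub_le_add _ _
          _ ≤ Complex.abs ((z₁ + z₂) - (y₁ + y₂)) + Complex.abs (z₁ - y₂) +
              Complex.abs (z₂ - y₂) := by
                have := Complex.abs.sub_le_add ((z₁ + z₂) - (y₁ + y₂)) (z₁ - y₂)
                linarith
      linarith
    rcases h1 with h1 | h1 <;> rcases h2 with h2 | h2
    · exact absurd ⟨h1, h2⟩ hnotboth1
    · exact ⟨z₁, z₂, hfacx, hnear1 z₁ h1, hnear2 z₂ h2⟩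
    · exact ⟨z₂, z₁, fun y => by rw [hfacx y]; ring, hnear1 z₂ h2, hnear2 z₁ h1⟩
    · exact absurd ⟨h1, h2⟩ hnotboth2
  -- connectedness argument
  have hsphere_conn : IsPreconnected (Metric.sphere (0 : ℂ) 1) :=
    (isConnected_sphere (Complex.rank_real_complex ▸ Nat.one_lt_ofNat) 0
      zero_le_one).isPreconnected
  have hmem_sphere : ∀ x : ℂ, x ∈ Metric.sphere (0 : ℂ) 1 ↔ Complex.abs x = 1 := by
    intro x
    rw [mem_sphere_zero_iff_norm, Complex.norm_eq_abs]
  -- 1 is not in V₂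
  have h1V₂ : (1 : ℂ) ∉ V₂ := by
    intro h
    have := h 0 (by ring)
    rw [map_zero] at this
    linarith
  -- -1 is not in V₁
  have hm1V₁ : (-1 : ℂ) ∉ V₁ := by
    intro h
    obtain ⟨z₁, z₂, hfac⟩ := quad_factor (1 - k * (-1)) ((-1 : ℂ) ^ 2 - (-1 : ℂ) ^ 3)
    have hz₁ : Complex.abs z₁ < 1 := h z₁ (by rw [hfac]; ring)
    have hz₂ : Complex.abs z₂ < 1 := h z₂ (by rw [hfac]; ring)
    have hc := (factor_coeffs hfac).2
    have : ((-1 : ℂ) ^ 2 - (-1 : ℂ) ^ 3) = 2 := by norm_num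
    rw [this] at hc
    have : (2 : ℝ) = Complex.abs z₁ * Complex.abs z₂ := by
      rw [← map_mul, ← hc]
      simp [← Complex.norm_eq_abs]
    nlinarith [Complex.abs.nonneg z₁, Complex.abs.nonneg z₂]
  -- V₁ and V₂ are disjoint
  have hV₁V₂ : ∀ x : ℂ, x ∈ V₁ → x ∈ V₂ → False := by
    intro x h1 h2
    obtain ⟨z₁, z₂, hfac⟩ := quad_factor (1 - k * x) (x ^ 2 - x ^ 3)
    have hz : z₁ ^ 2 + (1 - k * x) * z₁ + (x ^ 2 - x ^ 3) = 0 := by rw [hfac]; ring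
    exact absurd (h1 z₁ hz) (not_lt.mpr (h2 z₁ hz).le)
  -- U is disjoint from V₁ ∪ V₂
  have hUV : ∀ x : ℂ, x ∈ U → x ∈ V₁ ∪ V₂ → False := by
    intro x hU hV
    obtain ⟨y₁, y₂, hfac, hy₁, hy₂⟩ := hU
    have hr1 : y₁ ^ 2 + (1 - k * x) * y₁ + (x ^ 2 - x ^ 3) = 0 := by rw [hfac]; ring
    have hr2 : y₂ ^ 2 + (1 - k * x) * y₂ + (x ^ 2 - x ^ 3) = 0 := by rw [hfac]; ring
    rcases hV with hV | hV
    · exact absurd (hV y₂ hr2) (not_lt.mpr hy₂.le)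
    · exact absurd (hV y₁ hr1) (not_lt.mpr hy₁.le)
  have h1mem : (1 : ℂ) ∈ Metric.sphere (0 : ℂ) 1 := by
    rw [hmem_sphere]; simp
  have hm1mem : (-1 : ℂ) ∈ Metric.sphere (0 : ℂ) 1 := by
    rw [hmem_sphere]; simp
  -- S ∩ U is nonempty
  have hSU : (Metric.sphere (0 : ℂ) 1 ∩ U).Nonempty := by
    by_contra hSU
    rw [Set.not_nonempty_iff_eq_empty] at hSU
    have hcov : Metric.sphere (0 : ℂ) 1 ⊆ V₁ ∪ V₂ := by
      intro x hx
      rcases hcover x ((hmem_sphere x).mp hx) with h | h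
      · exfalso
        have hmem : x ∈ Metric.sphere (0 : ℂ) 1 ∩ U := ⟨hx, h⟩
        rw [hSU] at hmem
        exact hmem
      · exact h
    have h1V₁ : (1 : ℂ) ∈ V₁ := by
      rcases hcov h1mem with h | h
      · exact h
      · exact absurd h h1V₂
    have hm1V₂ : (-1 : ℂ) ∈ V₂ := by
      rcases hcov hm1mem with h | h
      · exact absurd h hm1V₁
      · exact h
    obtain ⟨x, _, hx1, hx2⟩ := hsphere_conn V₁ V₂ hV₁open hV₂open hcov
      ⟨1, h1mem, h1V₁⟩ ⟨-1, hm1mem, hm1V₂⟩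
    exact hV₁V₂ x hx1 hx2
  -- S ⊆ U
  have hSsub : Metric.sphere (0 : ℂ) 1 ⊆ U := by
    by_contra hSsub
    rw [Set.not_subset] at hSsub
    obtain ⟨x₀, hx₀S, hx₀U⟩ := hSsub
    have hx₀V : x₀ ∈ V₁ ∪ V₂ := by
      rcases hcover x₀ ((hmem_sphere x₀).mp hx₀S) with h | h
      · exact absurd h hx₀U
      · exact h
    obtain ⟨x, _, hxU, hxV⟩ := hsphere_conn U (V₁ ∪ V₂) hUopen (hV₁open.union hV₂open)
      (fun x hx => hcover x ((hmem_sphere x).mp hx)) hSU ⟨x₀, hx₀S, hx₀V⟩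
    exact hUV x hxU hxV
  intro x hx
  exact hSsub ((hmem_sphere x).mpr hx)
end
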